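/- Let A be a commutative ring, ψ = t + h where h ∈ A[t, t^{-1}] is a Laurent polynomial all of whose coefficients are nilpotent in A. Let φ : A((t)) → A((t)) be the substitution endomorphism φ(f) = f(ψ). Then φ is bijective (an automorphism of the A-algebra A((t))). -/

import Mathlib

open HahnSeries

/-- Continuity at `0` for the topology on `A((t))` with base of neighborhoods of zero
given by the submodules `tˡA[[t]]`, `l ∈ ℤ`. -/
def IsContMap {A : Type*} [CommRing A] (φ : LaurentSeries A → LaurentSeries A) : Prop :=
  ∀ d : ℤ, ∃ e : ℤ, ∀ f : LaurentSeries A,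
    (∀ i : ℤ, i < e → f.coeff i = 0) → ∀ i : ℤ, i < d → (φ f).coeff i = 0

/-- The ideal of Laurent series all of whose coefficients lie in `I`. -/
def coeffIdeal {A : Type*} [CommRing A] (I : Ideal A) : Ideal (LaurentSeries A) where
  carrier := {f | ∀ i, f.coeff i ∈ I}
  add_mem' hf hg i := by rw [HahnSeries.coeff_add]; exact I.add_mem (hf i) (hg i)
  zero_mem' i := by simp
  smul_mem' g f hf := by
    intro i
    rw [smul_eq_mul, HahnSeries.coeff_mul]
    exact Ideal.sum_mem _ fun ij _ => I.mul_mem_left _ (hf ij.2)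

theorem mem_coeffIdeal {A : Type*} [CommRing A] {I : Ideal A} {f : LaurentSeries A} :
    f ∈ coeffIdeal I ↔ ∀ i, f.coeff i ∈ I := Iff.rfl

theorem pow_sub_pow_mem {R : Type*} [CommRing R] (J : Ideal R) {x y : R}
    (hxy : x - y ∈ J) : ∀ n : ℕ, x ^ n - y ^ n ∈ J := by
  intro n
  induction n with
  | zero => simp
  | succ n ih =>
    have : x ^ (n + 1) - y ^ (n + 1) = x ^ n * (x - y) + y * (x ^ n - y ^ n) := by ring
    rw [this]
    exact J.add_mem (J.mul_mem_left _ hxy) (J.mul_mem_left _ ih)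

theorem zpow_sub_zpow_mem {R : Type*} [CommRing R] (J : Ideal R) (u v : Rˣ)
    (huv : (u : R) - v ∈ J) : ∀ j : ℤ, ((u ^ j : Rˣ) : R) - ((v ^ j : Rˣ) : R) ∈ J := by
  have hinv : ((u⁻¹ : Rˣ) : R) - ((v⁻¹ : Rˣ) : R) ∈ J := by
    have : ((u⁻¹ : Rˣ) : R) - ((v⁻¹ : Rˣ) : R) = (u⁻¹ : Rˣ) * (v⁻¹ : Rˣ) * ((v : R) - u) := by
      simp only [mul_sub, mul_assoc, Units.inv_mul, mul_one]
      rw [mul_left_comm, Units.inv_mul, mul_one]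
    rw [this]
    exact J.mul_mem_left _ (by simpa using J.neg_mem huv)
  intro j
  rcases j with n | n
  · simpa [zpow_natCast, Units.val_pow_eq_pow_val] using pow_sub_pow_mem J huv n
  · simp only [zpow_negSucc, Units.val_pow_eq_pow_val]
    exact pow_sub_pow_mem J hinv (n + 1)

/-- `t = single 1 1` as a unit of the Laurent series ring. -/
noncomputable def tUnit (A : Type*) [CommRing A] : (LaurentSeries A)ˣ where
  val := HahnSeries.single 1 1
  inv := HahnSeries.single (-1) 1
  val_inv := by rw [single_mul_single]; norm_num [single_zero_one]
  inv_val := by rw [single_mul_single]; norm_num [single_zero_one]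

theorem tUnit_zpow_val {A : Type*} [CommRing A] (j : ℤ) :
    ((tUnit A ^ j : (LaurentSeries A)ˣ) : LaurentSeries A) = HahnSeries.single j 1 := by
  induction j using Int.induction_on with
  | zero => simp [single_zero_one]
  | succ n ih =>
    rw [zpow_add_one, Units.val_mul, ih]
    show _ * (tUnit A).val = _
    rw [tUnit, single_mul_single, mul_one]
  | pred n ih =>
    rw [zpow_sub_one, Units.val_mul, ih]
    show _ * (tUnit A).inv = _
    rw [tUnit, single_mul_single, mul_one, sub_eq_add_neg]

theorem coeff_fsum {A : Type*} [CommRing A] {α : Type*} (s : Finset α)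
    (g : α → LaurentSeries A) (j : ℤ) :
    (∑ x ∈ s, g x).coeff j = ∑ x ∈ s, (g x).coeff j :=
  map_sum (HahnSeries.coeff.addMonoidHom j) g s

theorem single_eq_smul {A : Type*} [CommRing A] (j : ℤ) (c : A) :
    HahnSeries.single j c = c • HahnSeries.single j (1 : A) := by
  ext i
  rw [HahnSeries.coeff_smul, HahnSeries.coeff_single, HahnSeries.coeff_single]
  split <;> simp

theorem algHom_smul_apply {A : Type*} [CommRing A] (φ : LaurentSeries A →ₐ[A] LaurentSeries A)
    (c : A) (x : LaurentSeries A) : φ (c • x) = c • φ x := by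
  rw [← HahnSeries.C_mul_eq_smul, map_mul, ← HahnSeries.C_mul_eq_smul]
  congr 1
  have : (HahnSeries.C c : LaurentSeries A) = algebraMap A (LaurentSeries A) c := by
    rw [HahnSeries.algebraMap_apply', ← PowerSeries.C_eq_algebraMap, HahnSeries.ofPowerSeries_C]
  rw [this, AlgHom.commutes]

/-- Let `ψ = t + h` where `h` is a Laurent polynomial (finite support) all of whose
coefficients are nilpotent in `A`, and let `φ` be the continuous `A`-algebra
endomorphism of `A((t))` with `φ(t) = ψ` (the substitution `f ↦ f(ψ)`). Then `φ` is
bijective, i.e. an automorphism of the `A`-algebra `A((t))`. -/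
theorem substitution_by_nilpotent_perturbation_bijective {A : Type*} [CommRing A]
    (h : LaurentSeries A) (hfin : (Function.support h.coeff).Finite)
    (hnil : ∀ l : ℤ, IsNilpotent (h.coeff l))
    (ψ : LaurentSeries A) (hψ : ψ = HahnSeries.single 1 1 + h)
    (φ : LaurentSeries A →ₐ[A] LaurentSeries A) (hcont : IsContMap ⇑φ)
    (hφt : φ (HahnSeries.single 1 1) = ψ) :
    Function.Bijective ⇑φ := by
  classical
  set 𝔞 : Ideal A := Ideal.span (h.coeff '' Function.support h.coeff) with h𝔞
  have h𝔞fg : 𝔞.FG := ⟨(hfin.image h.coeff).toFinset, by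
    rw [Set.Finite.coe_toFinset]⟩
  have hcoeff𝔞 : ∀ l, h.coeff l ∈ 𝔞 := by
    intro l
    by_cases hl : h.coeff l = 0
    · rw [hl]; exact 𝔞.zero_mem
    · exact Ideal.subset_span ⟨l, hl, rfl⟩
  have hrad : 𝔞 ≤ (⊥ : Ideal A).radical := by
    rw [h𝔞, Ideal.span_le]
    rintro x ⟨l, -, rfl⟩
    obtain ⟨m, hm⟩ := hnil l
    exact ⟨m, by simp [hm]⟩
  obtain ⟨n, hn⟩ : ∃ n : ℕ, 𝔞 ^ n = ⊥ := by
    obtain ⟨n, hn⟩ := Ideal.exists_pow_le_of_le_radical_of_fg hrad h𝔞fg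
    exact ⟨n, le_bot_iff.1 hn⟩
  -- Key Lemma A : φ f - f has all coefficients in 𝔞
  have hsingle : ∀ j : ℤ, φ (HahnSeries.single j 1) - HahnSeries.single j 1 ∈ coeffIdeal 𝔞 := by
    intro j
    set Ψ := Units.map φ.toRingHom.toMonoidHom (tUnit A) with hΨ
    have h1 : φ (HahnSeries.single j 1) = ((Ψ ^ j : (LaurentSeries A)ˣ) : LaurentSeries A) := by
      rw [← tUnit_zpow_val j]
      rw [hΨ, ← map_zpow, Units.coe_map]
      rfl
    have huv : ((Ψ : LaurentSeries A)) - ((tUnit A : LaurentSeries A)) ∈ coeffIdeal 𝔞 := by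
      have h3 : (Ψ : LaurentSeries A) = ψ := by
        rw [hΨ]
        exact hφt
      have h4 : ((tUnit A : LaurentSeries A)) = HahnSeries.single 1 1 := rfl
      rw [h3, h4, hψ, add_sub_cancel_left]
      exact fun i => hcoeff𝔞 i
    rw [h1, ← tUnit_zpow_val j]
    exact zpow_sub_zpow_mem _ Ψ (tUnit A) huv j
  have keyA : ∀ f : LaurentSeries A, φ f - f ∈ coeffIdeal 𝔞 := by
    intro f
    rw [mem_coeffIdeal]
    intro i
    obtain ⟨e, he⟩ := hcont (i + 1)
    set N : ℤ := max e (i + 1) with hN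
    have hFfin : {j : ℤ | f.coeff j ≠ 0 ∧ j < N}.Finite := by
      rcases Set.eq_empty_or_nonempty (Function.support f.coeff) with hs | hs
      · refine Set.Finite.subset (Set.finite_empty) ?_
        rintro j ⟨hj1, -⟩
        exact absurd (Set.eq_empty_iff_forall_notMem.1 hs j) (by simpa using hj1)
      · refine Set.Finite.subset (Set.finite_Ico (f.isWF_support.min hs) N) ?_
        rintro j ⟨hj1, hj2⟩
        exact ⟨f.isWF_support.min_le hs hj1, hj2⟩
    set F := hFfin.toFinset with hF
    set P : LaurentSeries A := ∑ j ∈ F, HahnSeries.single j (f.coeff j) with hPdef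
    have hPcoeff : ∀ j : ℤ, j < N → P.coeff j = f.coeff j := by
      intro j hj
      rw [hPdef, coeff_fsum]
      by_cases hj0 : f.coeff j = 0
      · rw [hj0]
        refine Finset.sum_eq_zero fun j' _ => ?_
        rw [HahnSeries.coeff_single]
        split
        · next heq => rw [heq] at hj0; exact hj0
        · rfl
      · have hjF : j ∈ F := by rw [hF, Set.Finite.mem_toFinset]; exact ⟨hj0, hj⟩
        rw [Finset.sum_eq_single_of_mem j hjF
          (fun j' _ hne => HahnSeries.coeff_single_of_ne (Ne.symm hne)),
          HahnSeries.coeff_single_same]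
    have hfP1 : (φ f).coeff i = (φ P).coeff i := by
      have h5 : ∀ j : ℤ, j < e → (f - P).coeff j = 0 := by
        intro j hj
        rw [HahnSeries.coeff_sub, hPcoeff j (lt_of_lt_of_le hj (le_max_left _ _)), sub_self]
      have h6 := he (f - P) h5 i (by omega)
      rw [map_sub, HahnSeries.coeff_sub] at h6
      exact sub_eq_zero.1 h6
    have hfP2 : f.coeff i = P.coeff i := (hPcoeff i (by omega)).symm
    have hPP : φ P - P
        = ∑ j ∈ F, (f.coeff j) • (φ (HahnSeries.single j 1) - HahnSeries.single j 1) := by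
      rw [hPdef, map_sum, ← Finset.sum_sub_distrib]
      refine Finset.sum_congr rfl fun j _ => ?_
      rw [single_eq_smul j (f.coeff j), algHom_smul_apply, smul_sub]
    have h7 : (φ f - f).coeff i = (φ P - P).coeff i := by
      rw [HahnSeries.coeff_sub, HahnSeries.coeff_sub, hfP1, hfP2]
    rw [h7, hPP, coeff_fsum]
    refine Ideal.sum_mem _ fun j _ => ?_
    rw [HahnSeries.coeff_smul, smul_eq_mul]
    exact Ideal.mul_mem_left _ _ (hsingle j i)
  -- Key Lemma B
  have keyB : ∀ (I : Ideal A), I.FG → ∀ f ∈ coeffIdeal I, φ f - f ∈ coeffIdeal (I * 𝔞) := by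
    intro I hIfg f hf
    obtain ⟨G, hG⟩ := hIfg
    have hchoice : ∀ i : ℤ, ∃ b : A → A, ∑ c ∈ G, b c * c = f.coeff i := by
      intro i
      have h8 := hf i
      rw [← hG] at h8
      obtain ⟨b, -, hb⟩ := Submodule.mem_span_finset.1 h8
      exact ⟨b, by simpa [smul_eq_mul] using hb⟩
    choose b hb using hchoice
    set b' : ℤ → A → A := fun i c => if f.coeff i = 0 then 0 else b i c with hb'
    have hgsupp : ∀ c : A, Function.support (fun i => b' i c) ⊆ f.support := by
      intro c i hi
      simp only [hb', Function.mem_support, ne_eq, ite_eq_left_iff, not_forall] at hi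
      exact hi.1
    set g : A → LaurentSeries A := fun c =>
      ⟨fun i => b' i c, f.isPWO_support.mono (hgsupp c)⟩ with hg
    have hfd : f = ∑ c ∈ G, c • g c := by
      ext i
      rw [coeff_fsum]
      by_cases h0 : f.coeff i = 0
      · rw [h0]
        refine (Finset.sum_eq_zero fun c _ => ?_).symm
        show c • (g c).coeff i = 0
        show c • (b' i c) = 0
        simp [hb', h0]
      · have h9 : ∀ c ∈ G, (c • g c).coeff i = b i c * c := by
          intro c _
          show c • (b' i c) = b i c * c
          simp [hb', h0, smul_eq_mul, mul_comm]
        rw [Finset.sum_congr rfl h9, hb i]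
    have h10 : φ f - f = ∑ c ∈ G, c • (φ (g c) - g c) := by
      conv_lhs => rw [hfd]
      rw [map_sum, ← Finset.sum_sub_distrib]
      exact Finset.sum_congr rfl fun c _ => by rw [algHom_smul_apply, smul_sub]
    rw [h10, mem_coeffIdeal]
    intro i
    rw [coeff_fsum]
    refine Ideal.sum_mem _ fun c hc => ?_
    rw [HahnSeries.coeff_smul, smul_eq_mul]
    exact Ideal.mul_mem_mul (hG ▸ Ideal.subset_span hc) (keyA (g c) i)
  constructor
  · -- injective
    have hker : ∀ f, φ f = 0 → f = 0 := by
      intro f hf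
      have hmem : ∀ m : ℕ, f ∈ coeffIdeal (𝔞 ^ m) := by
        intro m
        induction m with
        | zero =>
          rw [pow_zero, mem_coeffIdeal]
          intro i
          rw [Ideal.one_eq_top]
          trivial
        | succ m ih =>
          have h2 := keyB (𝔞 ^ m) (Submodule.FG.pow h𝔞fg m) f ih
          rw [← pow_succ, hf, zero_sub] at h2
          exact (neg_mem_iff).1 h2
      have h11 := hmem n
      rw [hn] at h11
      ext i
      simpa using (Ideal.mem_bot).1 (h11 i)
    intro f1 f2 heq
    have h12 := hker (f1 - f2) (by rw [map_sub, heq, sub_self])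
    exact sub_eq_zero.1 h12
  · -- surjective
    intro g0
    set seq : ℕ → LaurentSeries A :=
      fun m => Nat.rec g0 (fun _ fm => fm + (g0 - φ fm)) m with hseq
    have hr : ∀ m : ℕ, g0 - φ (seq m) ∈ coeffIdeal (𝔞 ^ (m + 1)) := by
      intro m
      induction m with
      | zero =>
        have h13 : g0 - φ (seq 0) = -(φ g0 - g0) := by
          show g0 - φ g0 = _
          rw [neg_sub]
        rw [h13, pow_one]
        exact neg_mem (keyA g0)
      | succ m ih =>
        have h2 := keyB (𝔞 ^ (m + 1)) (Submodule.FG.pow h𝔞fg _) _ ih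
        rw [← pow_succ] at h2
        have h3 : g0 - φ (seq (m + 1))
            = -(φ (g0 - φ (seq m)) - (g0 - φ (seq m))) := by
          have hstep : seq (m + 1) = seq m + (g0 - φ (seq m)) := rfl
          rw [hstep, map_add]
          ring
        rw [h3]
        exact neg_mem h2
    refine ⟨seq n, ?_⟩
    have h4 := hr n
    have h5 : 𝔞 ^ (n + 1) = ⊥ := by rw [pow_succ, hn, Ideal.bot_mul]
    rw [h5] at h4
    have h6 : g0 - φ (seq n) = 0 := by
      ext i
      simpa using (Ideal.mem_bot).1 (h4 i)
    rw [sub_eq_zero] at h6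
    exact h6.symm
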